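/- (Gap increase bound on false successful steps with bounded noise.) Suppose f̃(x+ts) ≤ f̃(x) + c t sᵀg + 2ε_f with c ∈ (0,1), t > 0, sᵀg ≤ 0, and |f(y) − f̃(y)| ≤ ε_f for all y. If moreover f(x) − f* > ε, then f(x+ts) − f* ≤ (1 + 4ε_f/ε)(f(x) − f*). -/
import Mathlib

open scoped RealInnerProductSpace

/-- Gap increase bound on false successful steps with bounded noise. -/
theorem stmt_12 {n : ℕ} (f ftil : EuclideanSpace ℝ (Fin n) → ℝ)
    (c epsf eps fstar t : ℝ) (x s g : EuclideanSpace ℝ (Fin n))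
    (hc : 0 < c) (hc1 : c < 1) (ht : 0 < t) (hsg : ⟪s, g⟫ ≤ 0)
    (heps : 0 < eps)
    (hnoise : ∀ y, |f y - ftil y| ≤ epsf)
    (harmijo : ftil (x + t • s) ≤ ftil x + c * t * ⟪s, g⟫ + 2 * epsf)
    (hgap : f x - fstar > eps) :
    f (x + t • s) - fstar ≤ (1 + 4 * epsf / eps) * (f x - fstar) := by
  have h1 := abs_le.mp (hnoise (x + t • s))
  have h2 := abs_le.mp (hnoise x)
  have hef : 0 ≤ epsf := le_trans (abs_nonneg _) (hnoise x)
  have hcts : c * t * ⟪s, g⟫ ≤ 0 :=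
    mul_nonpos_of_nonneg_of_nonpos (le_of_lt (mul_pos hc ht)) hsg
  have key : f (x + t • s) ≤ f x + 4 * epsf := by linarith [h1.1, h1.2, h2.1, h2.2]
  have hdiv : 4 * epsf / eps * eps = 4 * epsf := div_mul_cancel₀ _ (ne_of_gt heps)
  have h4 : 0 ≤ 4 * epsf / eps := div_nonneg (by linarith) heps.le
  nlinarith [mul_le_mul_of_nonneg_left (le_of_lt hgap) h4]
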